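/- Let n ≥ 1, 1 ≤ k ≤ n, 1 ≤ i ≤ n, and let r₁, …, r_n be real numbers. Then, as an identity of real polynomials in t, q_{i,k}(t) = π_{i,n}^{(n−k)}(t) / (n−k)!, where π_{i,n}^{(n−k)} denotes the (n−k)-th derivative of π_{i,n}. -/

import Mathlib

open Polynomial

/-- `σ_m(r+tI) = Σ_{1≤i₁<…<i_m≤n} (t+r_{i₁})⋯(t+r_{i_m})` as a real polynomial in `t`. -/
noncomputable def sigmaTP (n : ℕ) (r : Fin n → ℝ) (m : ℕ) : Polynomial ℝ :=
  ∑ s ∈ Finset.powersetCard m (Finset.univ : Finset (Fin n)),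
    ∏ i ∈ s, (X + C (r i))

/-- `q_{i,k}(t) = Σ_{j=0}^{k−1} (−1)^j σ_{k−1−j}(r+tI) (t+r_i)^j`. -/
noncomputable def qPoly (n : ℕ) (r : Fin n → ℝ) (i : Fin n) (k : ℕ) : Polynomial ℝ :=
  ∑ j ∈ Finset.range k, ((-1 : ℝ) ^ j) • (sigmaTP n r (k - 1 - j) * (X + C (r i)) ^ j)

/-- `p_{k+1}(t) = (r₀₀ + t) σ_k(r+tI) − Σ_{i=1}^n q_{i,k}(t) x_i²`. -/
noncomputable def pPoly (n k : ℕ) (r₀₀ : ℝ) (r : Fin n → ℝ) (x : Fin n → ℝ) :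
    Polynomial ℝ :=
  (X + C r₀₀) * sigmaTP n r k - ∑ i : Fin n, ((x i) ^ 2) • qPoly n r i k

/-- `π_n(t) = (t+r₁)⋯(t+r_n)`. -/
noncomputable def piN (n : ℕ) (r : Fin n → ℝ) : Polynomial ℝ :=
  ∏ i : Fin n, (X + C (r i))

/-- `π_{i,n}(t) = ∏_{j≠i} (t+r_j)`. -/
noncomputable def piIN (n : ℕ) (r : Fin n → ℝ) (i : Fin n) : Polynomial ℝ :=
  ∏ j ∈ Finset.univ.erase i, (X + C (r j))


open Polynomial Finset

section Aux

variable {n : ℕ} (r : Fin n → ℝ)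

/-- elementary-symmetric-type polynomial over a subset. -/
noncomputable def esp (s : Finset (Fin n)) (m : ℕ) : Polynomial ℝ :=
  ∑ T ∈ s.powersetCard m, ∏ j ∈ T, (X + C (r j))

lemma deriv_prod_finset {ι : Type*} [DecidableEq ι] (T : Finset ι) (f : ι → ℝ[X]) :
    derivative (∏ j ∈ T, f j) = ∑ j ∈ T, (∏ x ∈ T.erase j, f x) * derivative (f j) := by
  classical
  induction T using Finset.induction_on with
  | empty => simp
  | insert a s hx ih =>
    rw [Finset.prod_insert hx, derivative_mul, Finset.sum_insert hx,
      Finset.erase_insert hx, ih, Finset.mul_sum]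
    congr 1
    · exact mul_comm _ _
    · refine Finset.sum_congr rfl fun j hj => ?_
      rw [Finset.erase_insert_of_ne (by rintro rfl; exact hx hj),
        Finset.prod_insert (fun h => hx (Finset.mem_of_mem_erase h))]
      ring

lemma esp_deriv (s : Finset (Fin n)) (m : ℕ) :
    derivative (esp r s (m + 1)) = (s.card - m) • esp r s m := by
  classical
  unfold esp
  rw [map_sum]
  simp only [deriv_prod_finset, derivative_add, derivative_X, derivative_C, add_zero, mul_one]
  rw [Finset.smul_sum]
  have hR : ∀ U ∈ s.powersetCard m,
      (s.card - m) • ∏ j ∈ U, (X + C (r j)) = ∑ _j ∈ s \ U, ∏ j ∈ U, (X + C (r j)) := by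
    intro U hU
    rw [Finset.sum_const]
    rw [Finset.mem_powersetCard] at hU
    rw [Finset.card_sdiff_of_subset hU.1, hU.2]
  rw [Finset.sum_congr rfl hR, Finset.sum_sigma' (s.powersetCard (m+1)) _
      (fun T j => ∏ x ∈ T.erase j, (X + C (r x))),
    Finset.sum_sigma' (s.powersetCard m) _
      (fun U _j => ∏ x ∈ U, (X + C (r x)))]
  refine Finset.sum_bij' (fun p _ => ⟨p.1.erase p.2, p.2⟩) (fun p _ => ⟨insert p.2 p.1, p.2⟩)
    ?_ ?_ ?_ ?_ ?_
  · rintro ⟨T, j⟩ hp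
    simp only [Finset.mem_sigma, Finset.mem_powersetCard] at hp ⊢
    obtain ⟨⟨hTs, hTc⟩, hj⟩ := hp
    refine ⟨⟨(Finset.erase_subset _ _).trans hTs, ?_⟩, ?_⟩
    · rw [Finset.card_erase_of_mem hj, hTc]; rfl
    · simp [Finset.mem_sdiff, hTs hj]
  · rintro ⟨U, j⟩ hp
    simp only [Finset.mem_sigma, Finset.mem_powersetCard, Finset.mem_sdiff] at hp ⊢
    obtain ⟨⟨hUs, hUc⟩, hjs, hjU⟩ := hp
    refine ⟨⟨Finset.insert_subset hjs hUs, by rw [Finset.card_insert_of_notMem hjU, hUc]⟩,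
      Finset.mem_insert_self _ _⟩
  · rintro ⟨T, j⟩ hp
    simp only [Finset.mem_sigma] at hp
    simp [Finset.insert_erase hp.2]
  · rintro ⟨U, j⟩ hp
    simp only [Finset.mem_sigma, Finset.mem_sdiff] at hp
    simp [Finset.erase_insert_of_ne, Finset.erase_insert hp.2.2]
  · rintro ⟨T, j⟩ _
    rfl

lemma esp_iter_deriv (s : Finset (Fin n)) (d : ℕ) (hd : d ≤ s.card) :
    derivative^[d] (esp r s s.card) = d.factorial • esp r s (s.card - d) := by
  induction d with
  | zero => simp
  | succ d ih =>
    have hd' : d ≤ s.card := Nat.le_of_succ_le hd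
    rw [Function.iterate_succ_apply', ih hd', map_nsmul]
    have h1 : s.card - d = (s.card - (d + 1)) + 1 := by omega
    rw [h1, esp_deriv]
    have h2 : s.card - (s.card - (d + 1)) = d + 1 := by omega
    rw [h2, smul_smul, Nat.factorial_succ, Nat.mul_comm]

lemma sigmaTP_split (i : Fin n) (m : ℕ) :
    sigmaTP n r (m + 1) =
      esp r (Finset.univ.erase i) (m + 1) + (X + C (r i)) * esp r (Finset.univ.erase i) m := by
  classical
  unfold sigmaTP esp
  set s := Finset.univ.erase i with hs
  have h : (Finset.univ : Finset (Fin n)) = insert i s :=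
    (Finset.insert_erase (Finset.mem_univ i)).symm
  have his : i ∉ s := Finset.notMem_erase i _
  rw [h, Finset.powersetCard_succ_insert his]
  rw [Finset.sum_union ?disj]
  case disj =>
    rw [Finset.disjoint_left]
    intro T hT hT'
    rw [Finset.mem_powersetCard] at hT
    obtain ⟨U, hU, rfl⟩ := Finset.mem_image.mp hT'
    exact his (hT.1 (Finset.mem_insert_self i U))
  congr 1
  rw [Finset.sum_image, Finset.mul_sum]
  · refine Finset.sum_congr rfl fun T hT => ?_
    rw [Finset.mem_powersetCard] at hT
    rw [Finset.prod_insert (fun h => his (hT.1 h))]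
  · intro T hT U hU hTU
    rw [Finset.mem_coe, Finset.mem_powersetCard] at hT hU
    have hiT : i ∉ T := fun h => his (hT.1 h)
    have hiU : i ∉ U := fun h => his (hU.1 h)
    rw [← Finset.erase_insert hiT, ← Finset.erase_insert hiU, hTU]

lemma qPoly_succ (i : Fin n) (k : ℕ) :
    qPoly n r i (k + 1) = sigmaTP n r k - (X + C (r i)) * qPoly n r i k := by
  rw [qPoly, qPoly, Finset.sum_range_succ']
  have h0 : ((-1 : ℝ) ^ 0) • (sigmaTP n r (k + 1 - 1 - 0) * (X + C (r i)) ^ 0)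
      = sigmaTP n r k := by simp
  rw [h0, add_comm, sub_eq_add_neg]
  congr 1
  rw [Finset.mul_sum, ← Finset.sum_neg_distrib]
  refine Finset.sum_congr rfl fun j hj => ?_
  have hidx : k + 1 - 1 - (j + 1) = k - 1 - j := by omega
  rw [hidx, pow_succ ((-1 : ℝ)), pow_succ (X + C (r i)), smul_eq_C_mul, smul_eq_C_mul,
    map_mul]
  simp only [map_neg, map_one]
  ring

lemma qPoly_eq_esp (i : Fin n) (k : ℕ) (hk : 1 ≤ k) :
    qPoly n r i k = esp r (Finset.univ.erase i) (k - 1) := by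
  induction k with
  | zero => omega
  | succ k ih =>
    rcases Nat.eq_zero_or_pos k with rfl | hk'
    · simp [qPoly, sigmaTP, esp]
    · obtain ⟨m, rfl⟩ : ∃ m, k = m + 1 := ⟨k - 1, by omega⟩
      rw [qPoly_succ, ih (by omega), sigmaTP_split r i m]
      simp

end Aux

theorem qPoly_eq_deriv_piIN (n k : ℕ) (hn : 1 ≤ n) (hk1 : 1 ≤ k) (hkn : k ≤ n)
    (i : Fin n) (r : Fin n → ℝ) :
    qPoly n r i k =
      ((Nat.factorial (n - k) : ℝ))⁻¹ •
        ((fun p => Polynomial.derivative p)^[n - k] (piIN n r i)) := by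
  classical
  have hcard : (Finset.univ.erase i).card = n - 1 := by
    rw [Finset.card_erase_of_mem (Finset.mem_univ i), Finset.card_univ, Fintype.card_fin]
  have hpi : piIN n r i = esp r (Finset.univ.erase i) ((Finset.univ.erase i).card) := by
    unfold piIN esp
    rw [Finset.powersetCard_self, Finset.sum_singleton]
  have hfun : (fun p : Polynomial ℝ => Polynomial.derivative p)
      = (⇑(Polynomial.derivative (R := ℝ))) := rfl
  rw [hfun, hpi, esp_iter_deriv r _ (n - k) (by omega)]
  have hidx : (Finset.univ.erase i).card - (n - k) = k - 1 := by omega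
  rw [hidx, qPoly_eq_esp r i k hk1, ← Nat.cast_smul_eq_nsmul ℝ, smul_smul,
    inv_mul_cancel₀ (by exact_mod_cast (Nat.factorial_ne_zero (n - k))), one_smul]
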